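/- Let b > 0, σ > 0, and let ν be a measure on (0,∞) with ∫_0^∞ (z∧1) ν(dz) < ∞. Fix t > 0, and let μ be a probability measure on [0,∞) whose Laplace transform satisfies, for every real u ≤ 0, ∫ e^{uy} μ(dy) = exp(∫_0^t ∫_0^∞ (e^{zψ(s,u)} − 1) ν(dz) ds). Then for every δ > 0 one has μ([0,δ]) > 0. -/

import Mathlib

open MeasureTheory Filter Set
open scoped ENNReal

/-- `ψ(t,u) = u e^{−bt} / (1 − (σ²u/(2b))(1 − e^{−bt}))`. -/
noncomputable def psi (b σ t u : ℝ) : ℝ :=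
  u * Real.exp (-b * t) / (1 - σ ^ 2 * u / (2 * b) * (1 - Real.exp (-b * t)))

lemma exp_sub_one_lb (x : ℝ) : -min (-x) 1 ≤ Real.exp x - 1 := by
  rcases le_total (-x) 1 with h | h
  · rw [min_eq_left h]; nlinarith [Real.add_one_le_exp x]
  · rw [min_eq_right h]; nlinarith [Real.exp_nonneg x]

lemma min_mul_le_max_mul {z m : ℝ} (hz : 0 < z) (hm : 0 ≤ m) :
    min (z * m) 1 ≤ max m 1 * min z 1 := by
  rcases le_total z 1 with h | h
  · rw [min_eq_left h]
    calc min (z * m) 1 ≤ z * m := min_le_left _ _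
      _ ≤ max m 1 * z := by nlinarith [le_max_left m 1]
  · rw [min_eq_right h]
    calc min (z * m) 1 ≤ 1 := min_le_right _ _
      _ ≤ max m 1 := le_max_right _ _
      _ = max m 1 * 1 := (mul_one _).symm

lemma psi_bounds {b σ s u : ℝ} (hb : 0 < b) (hσ : 0 < σ) (hs : 0 < s) (hu : u ≤ 0) :
    u ≤ psi b σ s u ∧
    -(Real.exp (-(b * s)) / (σ ^ 2 / (2 * b) * (1 - Real.exp (-(b * s))))) ≤ psi b σ s u ∧
    psi b σ s u ≤ 0 := by
  set K := σ ^ 2 / (2 * b) with hK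
  have hKpos : 0 < K := by positivity
  set E := Real.exp (-(b * s)) with hE
  have hE0 : 0 < E := Real.exp_pos _
  have hE1 : E < 1 := by
    rw [hE, Real.exp_lt_one_iff]
    nlinarith
  have hpsi_eq : psi b σ s u = u * E / (1 - K * u * (1 - E)) := by
    rw [psi, hE, hK, neg_mul]
    ring_nf
  have hD : 0 < 1 - K * u * (1 - E) := by
    nlinarith [mul_nonneg (mul_nonneg hKpos.le (neg_nonneg.2 hu)) (by linarith : (0:ℝ) ≤ 1 - E)]
  have hKE : 0 < K * (1 - E) := by nlinarith
  refine ⟨?_, ?_, ?_⟩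
  · rw [hpsi_eq, le_div_iff₀ hD]
    nlinarith [sq_nonneg u]
  · rw [hpsi_eq, ← neg_div, div_le_div_iff₀ hKE hD]
    nlinarith
  · rw [hpsi_eq]
    apply div_nonpos_of_nonpos_of_nonneg _ hD.le
    exact mul_nonpos_of_nonpos_of_nonneg hu hE0.le

set_option maxHeartbeats 2000000 in
theorem Z_t_mass_near_zero (b σ t : ℝ) (hb : 0 < b) (hσ : 0 < σ) (ht : 0 < t)
    (ν : Measure ℝ) (hνsupp : ν (Set.Iic 0) = 0)
    (hν : ∫⁻ z in Set.Ioi (0 : ℝ), ENNReal.ofReal (min z 1) ∂ν < ⊤)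
    (μ : Measure ℝ) (hμ : IsProbabilityMeasure μ) (hμsupp : μ (Set.Iio 0) = 0)
    (hLap : ∀ u : ℝ, u ≤ 0 →
      ∫ y, Real.exp (u * y) ∂μ =
        Real.exp (∫ s in Set.Ioc (0 : ℝ) t,
          ∫ z in Set.Ioi (0 : ℝ), (Real.exp (z * psi b σ s u) - 1) ∂ν)) :
    ∀ δ : ℝ, 0 < δ → 0 < μ (Set.Icc 0 δ) := by
  intro δ hδ
  by_contra hcon
  have h0 : μ (Set.Icc 0 δ) = 0 := by
    simpa [pos_iff_ne_zero, not_not] using hcon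
  have hIio : μ (Set.Iio δ) = 0 := by
    have hsub : Set.Iio δ ⊆ Set.Iio 0 ∪ Set.Icc 0 δ := by
      intro y hy
      rcases lt_or_ge y 0 with h | h
      · exact Or.inl h
      · exact Or.inr ⟨h, le_of_lt hy⟩
    refine le_antisymm ((measure_mono hsub).trans ?_) (zero_le)
    calc μ (Set.Iio 0 ∪ Set.Icc 0 δ) ≤ μ (Set.Iio 0) + μ (Set.Icc 0 δ) := measure_union_le _ _
      _ = 0 := by rw [hμsupp, h0, add_zero]
  -- basic constants
  set K := σ ^ 2 / (2 * b) with hK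
  have hKpos : 0 < K := by positivity
  set g : ℝ → ℝ := fun s => Real.exp (-(b * s)) / (K * (1 - Real.exp (-(b * s)))) with hg
  have hgpos : ∀ s : ℝ, 0 < s → 0 < g s := by
    intro s hs
    have hE1 : Real.exp (-(b * s)) < 1 := by rw [Real.exp_lt_one_iff]; nlinarith
    have hE0 : 0 < Real.exp (-(b * s)) := Real.exp_pos _
    apply div_pos hE0
    nlinarith
  have hganti : ∀ s1 s2 : ℝ, 0 < s1 → s1 ≤ s2 → g s2 ≤ g s1 := by
    intro s1 s2 hs1 h12
    have hE2le : Real.exp (-(b * s2)) ≤ Real.exp (-(b * s1)) := by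
      apply Real.exp_le_exp.2; nlinarith
    have hE10 : 0 < Real.exp (-(b * s1)) := Real.exp_pos _
    have hE20 : 0 < Real.exp (-(b * s2)) := Real.exp_pos _
    have hE11 : Real.exp (-(b * s1)) < 1 := by rw [Real.exp_lt_one_iff]; nlinarith
    have hE21 : Real.exp (-(b * s2)) < 1 := by rw [Real.exp_lt_one_iff]; nlinarith
    rw [hg]
    rw [div_le_div_iff₀ (by nlinarith) (by nlinarith)]
    nlinarith
  -- integrability of min z 1
  have hmin_meas : Measurable fun z : ℝ => min z 1 := measurable_id.min measurable_const
  have hC'int : IntegrableOn (fun z : ℝ => min z 1) (Set.Ioi 0) ν := by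
    refine ⟨hmin_meas.aestronglyMeasurable, ?_⟩
    rw [hasFiniteIntegral_iff_ofReal ?_]
    · exact hν
    · filter_upwards [ae_restrict_mem measurableSet_Ioi] with z hz
      exact le_min (le_of_lt hz) one_pos.le
  set C' := ∫ z in Set.Ioi (0 : ℝ), min z 1 ∂ν with hC'
  have hC'0 : 0 ≤ C' :=
    setIntegral_nonneg measurableSet_Ioi fun z hz => le_min (le_of_lt hz) one_pos.le
  set s₀ := δ / (2 * (C' + 1)) with hs₀def
  have hs₀ : 0 < s₀ := by positivity
  have hC's₀ : C' * s₀ ≤ δ / 2 := by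
    have h1 : (0 : ℝ) < C' + 1 := by linarith
    calc C' * s₀ ≤ (C' + 1) * s₀ := by nlinarith
      _ = δ / 2 := by rw [hs₀def]; field_simp
  set C₀ := max (g s₀) 1 * C' with hC₀def
  have hC₀0 : 0 ≤ C₀ := mul_nonneg (le_trans zero_le_one (le_max_right _ _)) hC'0
  set u := -(1 + 2 * t * C₀ / δ) with hudef
  have hu1 : u ≤ -1 := by
    have : 0 ≤ 2 * t * C₀ / δ := by positivity
    rw [hudef]; linarith
  have hu0 : u ≤ 0 := by linarith
  set m : ℝ → ℝ := fun s => min (-u) (g s) with hm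
  set B : ℝ → ℝ := fun s => max (m s) 1 * C' with hB
  -- inner integral bound
  have hinner : ∀ s ∈ Set.Ioc (0 : ℝ) t,
      -(B s) ≤ ∫ z in Set.Ioi (0 : ℝ), (Real.exp (z * psi b σ s u) - 1) ∂ν := by
    intro s hs
    obtain ⟨hs0, hst⟩ := hs
    have hm0 : 0 ≤ m s := le_min (by linarith) (hgpos s hs0).le
    obtain ⟨hψu, hψg, hψ0⟩ := psi_bounds (s := s) (u := u) hb hσ hs0 hu0
    have hψm : -(m s) ≤ psi b σ s u := by
      rcases le_total (-u) (g s) with h | h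
      · rw [hm]; simp only [min_eq_left h, neg_neg]; exact hψu
      · rw [hm]; simp only [min_eq_right h]; exact hψg
    have hptl : ∀ z ∈ Set.Ioi (0 : ℝ),
        -(min (z * m s) 1) ≤ Real.exp (z * psi b σ s u) - 1 := by
      intro z hz
      have hz0 : 0 < z := hz
      have h1 : -(z * m s) ≤ z * psi b σ s u := by nlinarith
      have h2 : min (-(z * psi b σ s u)) 1 ≤ min (z * m s) 1 :=
        min_le_min (by linarith) le_rfl
      have := exp_sub_one_lb (z * psi b σ s u)
      linarith
    have hptu : ∀ z ∈ Set.Ioi (0 : ℝ), Real.exp (z * psi b σ s u) - 1 ≤ 0 := by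
      intro z hz
      have : Real.exp (z * psi b σ s u) ≤ 1 := by
        rw [Real.exp_le_one_iff]
        exact mul_nonpos_of_nonneg_of_nonpos (le_of_lt hz) hψ0
      linarith
    have hptm : ∀ z ∈ Set.Ioi (0 : ℝ), min (z * m s) 1 ≤ max (m s) 1 * min z 1 :=
      fun z hz => min_mul_le_max_mul hz hm0
    have hGint : IntegrableOn (fun z : ℝ => max (m s) 1 * min z 1) (Set.Ioi 0) ν :=
      hC'int.const_mul _
    have hfmeas : AEStronglyMeasurable (fun z : ℝ => Real.exp (z * psi b σ s u) - 1)
        (ν.restrict (Set.Ioi 0)) :=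
      ((Real.continuous_exp.comp (continuous_id.mul continuous_const)).sub
        continuous_const).aestronglyMeasurable
    have hfint : IntegrableOn (fun z : ℝ => Real.exp (z * psi b σ s u) - 1) (Set.Ioi 0) ν := by
      refine Integrable.mono' hGint hfmeas ?_
      filter_upwards [ae_restrict_mem measurableSet_Ioi] with z hz
      rw [Real.norm_eq_abs, abs_le]
      constructor
      · have := hptl z hz
        have := hptm z hz
        linarith
      · have h1 := hptu z hz
        have h2 : 0 ≤ max (m s) 1 * min z 1 :=
          mul_nonneg (le_trans zero_le_one (le_max_right _ _))
            (le_min (le_of_lt hz) one_pos.le)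
        linarith
    have key : ∫ z in Set.Ioi (0 : ℝ), -(max (m s) 1 * min z 1) ∂ν ≤
        ∫ z in Set.Ioi (0 : ℝ), (Real.exp (z * psi b σ s u) - 1) ∂ν := by
      refine setIntegral_mono_on hGint.neg hfint measurableSet_Ioi ?_
      intro z hz
      have := hptl z hz
      have := hptm z hz
      linarith
    calc -(B s) = ∫ z in Set.Ioi (0 : ℝ), -(max (m s) 1 * min z 1) ∂ν := by
          rw [integral_neg, MeasureTheory.integral_const_mul, ← hC']
      _ ≤ _ := key
  -- outer bound
  set F : ℝ → ℝ := fun s => ∫ z in Set.Ioi (0 : ℝ), (Real.exp (z * psi b σ s u) - 1) ∂ν with hF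
  have hBmeas : Measurable B := by
    apply Measurable.mul _ measurable_const
    apply Measurable.max _ measurable_const
    apply Measurable.min measurable_const
    apply Measurable.div
    · exact (Real.continuous_exp.comp (continuous_const.mul continuous_id).neg).measurable
    · exact (measurable_const.mul
        ((measurable_const.sub
          (Real.continuous_exp.comp (continuous_const.mul continuous_id).neg).measurable)))
  have hB0 : ∀ s, 0 ≤ B s := fun s =>
    mul_nonneg (le_trans zero_le_one (le_max_right _ _)) hC'0
  have hBle : ∀ s, B s ≤ -u * C' := by
    intro s
    have h1 : max (m s) 1 ≤ -u := by
      apply max_le (min_le_left _ _) (by linarith)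
    exact mul_le_mul_of_nonneg_right h1 hC'0
  have hBint : IntegrableOn B (Set.Ioc 0 t) volume := by
    refine Integrable.mono' (g := fun _ => -u * C')
      ((integrableOn_const_iff).2 (Or.inr measure_Ioc_lt_top)) hBmeas.aestronglyMeasurable ?_
    filter_upwards with s
    rw [Real.norm_eq_abs, abs_of_nonneg (hB0 s)]
    exact hBle s
  have houter : -(∫ s in Set.Ioc (0 : ℝ) t, B s) ≤ ∫ s in Set.Ioc (0 : ℝ) t, F s := by
    by_cases hFint : IntegrableOn F (Set.Ioc 0 t) volume
    · rw [← integral_neg]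
      exact setIntegral_mono_on hBint.neg hFint measurableSet_Ioc fun s hs => hinner s hs
    · rw [integral_undef hFint]
      exact neg_nonpos_of_nonneg (setIntegral_nonneg measurableSet_Ioc fun s _ => hB0 s)
  -- splitting the integral of B
  set s' := min s₀ t with hs'def
  have hs'0 : 0 < s' := lt_min hs₀ ht
  have hs't : s' ≤ t := min_le_right _ _
  have hsplit : Set.Ioc (0 : ℝ) t = Set.Ioc 0 s' ∪ Set.Ioc s' t :=
    (Set.Ioc_union_Ioc_eq_Ioc hs'0.le hs't).symm
  have h1int : IntegrableOn B (Set.Ioc 0 s') volume :=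
    hBint.mono_set (Set.Ioc_subset_Ioc le_rfl hs't)
  have h2int : IntegrableOn B (Set.Ioc s' t) volume :=
    hBint.mono_set (Set.Ioc_subset_Ioc hs'0.le le_rfl)
  have hbound1 : ∫ s in Set.Ioc (0 : ℝ) s', B s ≤ s₀ * (-u * C') := by
    calc ∫ s in Set.Ioc (0 : ℝ) s', B s ≤ ∫ _ in Set.Ioc (0 : ℝ) s', (-u * C') :=
        setIntegral_mono_on h1int ((integrableOn_const_iff).2 (Or.inr measure_Ioc_lt_top))
          measurableSet_Ioc fun s _ => hBle s
      _ = s' * (-u * C') := by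
          rw [setIntegral_const, measureReal_def, Real.volume_Ioc, smul_eq_mul, sub_zero,
            ENNReal.toReal_ofReal hs'0.le]
      _ ≤ s₀ * (-u * C') := by
          apply mul_le_mul_of_nonneg_right (min_le_left _ _)
          have : 0 ≤ -u := by linarith
          exact mul_nonneg this hC'0
  have hbound2 : ∫ s in Set.Ioc s' t, B s ≤ t * C₀ := by
    have hpt : ∀ s ∈ Set.Ioc s' t, B s ≤ C₀ := by
      intro s hs
      obtain ⟨hs1, hs2⟩ := hs
      have hs₀s : s₀ ≤ s := by
        rcases min_lt_iff.1 hs1 with h | h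
        · exact h.le
        · linarith
      have hgs : g s ≤ g s₀ := hganti s₀ s hs₀ hs₀s
      rw [hB, hC₀def]
      apply mul_le_mul_of_nonneg_right _ hC'0
      apply max_le _ (le_max_right _ _)
      exact le_trans (min_le_right _ _) (le_trans hgs (le_max_left _ _))
    calc ∫ s in Set.Ioc s' t, B s ≤ ∫ _ in Set.Ioc s' t, C₀ :=
        setIntegral_mono_on h2int ((integrableOn_const_iff).2 (Or.inr measure_Ioc_lt_top))
          measurableSet_Ioc hpt
      _ = (t - s') * C₀ := by
          rw [setIntegral_const, measureReal_def, Real.volume_Ioc, smul_eq_mul,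
            ENNReal.toReal_ofReal (by linarith)]
      _ ≤ t * C₀ := by nlinarith
  have htot : ∫ s in Set.Ioc (0 : ℝ) t, B s ≤ s₀ * (-u * C') + t * C₀ := by
    rw [hsplit, setIntegral_union (Set.Ioc_disjoint_Ioc_of_le le_rfl) measurableSet_Ioc h1int h2int]
    exact add_le_add hbound1 hbound2
  -- Laplace transform upper bound
  have haey : ∀ᵐ y ∂μ, δ ≤ y := by
    rw [ae_iff]
    have : {y : ℝ | ¬ δ ≤ y} = Set.Iio δ := by ext y; simp [not_le]
    rw [this]; exact hIio
  have hexp_meas : AEStronglyMeasurable (fun y : ℝ => Real.exp (u * y)) μ :=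
    (Real.continuous_exp.comp (continuous_const.mul continuous_id)).aestronglyMeasurable
  have hexp_int : Integrable (fun y : ℝ => Real.exp (u * y)) μ := by
    refine Integrable.mono' (integrable_const (Real.exp (u * δ))) hexp_meas ?_
    filter_upwards [haey] with y hy
    rw [Real.norm_eq_abs, abs_of_nonneg (Real.exp_nonneg _)]
    exact Real.exp_le_exp.2 (mul_le_mul_of_nonpos_left hy hu0)
  have key1 : ∫ y, Real.exp (u * y) ∂μ ≤ Real.exp (u * δ) := by
    have hle : ∀ᵐ y ∂μ, Real.exp (u * y) ≤ Real.exp (u * δ) := by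
      filter_upwards [haey] with y hy
      exact Real.exp_le_exp.2 (mul_le_mul_of_nonpos_left hy hu0)
    have h2 := integral_mono_ae hexp_int (integrable_const _) hle
    simpa using h2
  have key2 : (∫ s in Set.Ioc (0 : ℝ) t, F s) ≤ u * δ := by
    refine Real.exp_le_exp.1 ?_
    simp only [hF]
    rw [← hLap u hu0]
    exact key1
  -- final contradiction
  have hfinal : -(s₀ * (-u * C') + t * C₀) ≤ u * δ := le_trans (by linarith) key2
  have huδ : u * δ = -(δ + 2 * t * C₀) := by
    rw [hudef]; field_simp
  have h5 : u * (δ / 2) ≤ u * (C' * s₀) := mul_le_mul_of_nonpos_left hC's₀ hu0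
  clear_value K g C' s₀ C₀ u m B F s'
  linarith [hfinal, h5, huδ, hδ]
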